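/- If φ : [0, 2λ(B)] → X is a positively oriented parametrization of the unit circle of a two-dimensional normed space by twice the sector area (i.e., [φ(u), φ'(u)] = 1 for all u), then ‖φ'(u)‖ₐ = 1 for all u; that is, the area parametrization of the unit circle is an arc-length parametrization with respect to the anti-norm. -/

import Mathlib

/-- If φ is a parametrization of the unit circle with
[φ(u), φ'(u)] = 1 for all u (twice sector area parametrization), then
‖φ'(u)‖ₐ = 1 for all u: the area parametrization is an anti-norm arc-length
parametrization. -/
theorem stmt_6 {X : Type*} [NormedAddCommGroup X] [NormedSpace ℝ X]
    [StrictConvexSpace ℝ X] (hdim : Module.finrank ℝ X = 2)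
    (ω : X →ₗ[ℝ] X →ₗ[ℝ] ℝ) (halt : ∀ x : X, ω x x = 0) (hne : ω ≠ 0)
    (N : X → ℝ)
    (hN : ∀ z, N z = sSup {r : ℝ | ∃ w : X, ‖w‖ = 1 ∧ r = |ω z w|})
    (φ : ℝ → X) (φd : ℝ → X)
    (hcircle : ∀ u, ‖φ u‖ = 1)
    (hderiv : ∀ u, HasDerivAt φ (φd u) u)
    (harea : ∀ u, ω (φ u) (φd u) = 1) :
    ∀ u, N (φd u) = 1 := by
  intro u
  have hskew : ∀ x y : X, ω x y = - ω y x := by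
    intro x y
    have h := halt (x + y)
    simp only [map_add, LinearMap.add_apply, halt x, halt y] at h
    linarith
  have h1 : ω (φd u) (φ u) = -1 := by
    rw [hskew, harea u]
  have hφdne : φd u ≠ 0 := by
    intro h
    have := harea u
    rw [h] at this
    simp at this
  have hφne : φ u ≠ 0 := by
    intro h
    have := hcircle u
    rw [h] at this
    simp at this
  obtain ⟨f, hf1, hf2⟩ := exists_dual_vector ℝ (φ u) (norm_ne_zero_iff.mpr hφne)
  have hf2' : f (φ u) = 1 := by
    rw [hf2, hcircle u]
    norm_num
  -- u is a local max of f ∘ φ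
  have hmax : IsLocalMax (fun t => f (φ t)) u := by
    apply Filter.Eventually.of_forall
    intro t
    have : f (φ t) ≤ ‖f‖ * ‖φ t‖ := (le_abs_self _).trans (by simpa [Real.norm_eq_abs] using f.le_opNorm (φ t))
    rw [hf1, hcircle t] at this
    simpa [hf2'] using this
  have hd : HasDerivAt (fun t => f (φ t)) (f (φd u)) u :=
    (f.hasFDerivAt.comp_hasDerivAt u (hderiv u))
  have hf0 : f (φd u) = 0 := hmax.hasDerivAt_eq_zero hd
  -- φ u, φd u form a basis
  have hli : LinearIndependent ℝ ![φ u, φd u] := by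
    rw [LinearIndependent.pair_iff]
    intro s t hst
    have hs : s = 0 := by
      have h := congrArg (fun z => ω z (φd u)) hst
      simpa [map_add, LinearMap.add_apply, map_smul, LinearMap.smul_apply,
        smul_eq_mul, harea u, halt] using h
    refine ⟨hs, ?_⟩
    rw [hs, zero_smul, zero_add] at hst
    rcases smul_eq_zero.mp hst with h | h
    · exact h
    · exact absurd h hφdne
  have hcard : Fintype.card (Fin 2) = Module.finrank ℝ X := by simp [hdim]
  let B := basisOfLinearIndependentOfCardEqFinrank hli hcard
  have hB : ⇑B = ![φ u, φd u] := coe_basisOfLinearIndependentOfCardEqFinrank hli hcard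
  -- key bound
  have key : ∀ w : X, ‖w‖ = 1 → |ω (φd u) w| ≤ 1 := by
    intro w hw
    have hrep := B.sum_repr w
    rw [Fin.sum_univ_two] at hrep
    set a := B.repr w 0 with ha
    set b := B.repr w 1 with hb
    have hB0 : B 0 = φ u := by rw [hB]; rfl
    have hB1 : B 1 = φd u := by rw [hB]; rfl
    rw [hB0, hB1] at hrep
    have hfw : f w = a := by
      rw [← hrep]
      simp [hf2', hf0]
    have hωw : ω (φd u) w = -a := by
      rw [← hrep]
      simp [h1, halt]
    rw [hωw, abs_neg, ← hfw]
    calc |f w| ≤ ‖f‖ * ‖w‖ := by simpa [Real.norm_eq_abs] using f.le_opNorm w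
    _ = 1 := by rw [hf1, hw]; ring
  have hmem : (1 : ℝ) ∈ {r : ℝ | ∃ w : X, ‖w‖ = 1 ∧ r = |ω (φd u) w|} :=
    ⟨φ u, hcircle u, by rw [h1]; norm_num⟩
  have hbdd : BddAbove {r : ℝ | ∃ w : X, ‖w‖ = 1 ∧ r = |ω (φd u) w|} := by
    refine ⟨1, ?_⟩
    rintro r ⟨w, hw, rfl⟩
    exact key w hw
  rw [hN]
  apply le_antisymm
  · apply csSup_le ⟨1, hmem⟩
    rintro r ⟨w, hw, rfl⟩
    exact key w hw
  · exact le_csSup hbdd hmem
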